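/- arXiv:2312.14573 — 5 statements merged into one kernel-verified Lean document; each statement's English description precedes it below -/
import Mathlib

section
/- If φ is truth-conditional, then for every model M and world w: M,w ⊨ □_a φ iff M,w ⊨ ⊞_a φ iff M,v ⊨ φ for all v ∈ σ_a(w). -/
structure PreModel (W : Type) (A : Type) (P : Type) where
  Sig : A → W → Set (Set W)
  V : P → Set W

namespace PreModel

variable {W A P : Type}

def sigma (M : PreModel W A P) (a : A) (w : W) : Set W := ⋃₀ M.Sig a w

def IsInqEpi (M : PreModel W A P) : Prop :=
  (∀ a w, (M.Sig a w).Nonempty) ∧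
  (∀ a w, ∀ s ∈ M.Sig a w, ∀ t ⊆ s, t ∈ M.Sig a w) ∧
  (∀ a w, w ∈ M.sigma a w) ∧
  (∀ a w v, v ∈ M.sigma a w → M.Sig a v = M.Sig a w)

end PreModel

inductive Formula (A : Type) (P : Type) : Type
  | atom (p : P)
  | bot
  | and (φ ψ : Formula A P)
  | impl (φ ψ : Formula A P)
  | disj (φ ψ : Formula A P)
  | box (a : A) (φ : Formula A P)
  | wbox (a : A) (φ : Formula A P)

def support {W A P : Type} (M : PreModel W A P) : Formula A P → Set W → Prop
  | .atom p, s => s ⊆ M.V p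
  | .bot, s => s = ∅
  | .and φ ψ, s => support M φ s ∧ support M ψ s
  | .impl φ ψ, s => ∀ t ⊆ s, support M φ t → support M ψ t
  | .disj φ ψ, s => support M φ s ∨ support M ψ s
  | .box a φ, s => ∀ w ∈ s, support M φ (M.sigma a w)
  | .wbox a φ, s => ∀ w ∈ s, ∀ t ∈ M.Sig a w, support M φ t

def TruthConditional {A P : Type} (φ : Formula A P) : Prop :=
  ∀ (W : Type) (M : PreModel W A P), M.IsInqEpi →
    ∀ s : Set W, support M φ s ↔ ∀ w ∈ s, support M φ {w}

/-- For truth-conditional φ, `□_a φ`, `⊞_a φ` and the Kripke box coincide. -/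
theorem stmt_7 {W A P : Type} (M : PreModel W A P) (h : M.IsInqEpi)
    (φ : Formula A P) (hφ : TruthConditional φ) (a : A) (w : W) :
    (support M (Formula.box a φ) {w} ↔ support M (Formula.wbox a φ) {w}) ∧
    (support M (Formula.box a φ) {w} ↔ ∀ v ∈ M.sigma a w, support M φ {v}) := by
  obtain ⟨hne, hdc, hrefl, hintro⟩ := h
  have hbox : support M (Formula.box a φ) {w} ↔ ∀ v ∈ M.sigma a w, support M φ {v} := by
    constructor
    · intro hb v hv
      have := hb w rfl
      exact (hφ W M ⟨hne, hdc, hrefl, hintro⟩ _).mp this v hv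
    · intro hk x hx
      cases hx
      exact (hφ W M ⟨hne, hdc, hrefl, hintro⟩ _).mpr hk
  refine ⟨?_, hbox⟩
  rw [hbox]
  constructor
  · intro hk x hx t ht
    cases hx
    refine (hφ W M ⟨hne, hdc, hrefl, hintro⟩ _).mpr ?_
    intro v hv
    exact hk v ⟨t, ht, hv⟩
  · intro hw v hv
    obtain ⟨t, ht, hvt⟩ := hv
    have h1 : ({v} : Set W) ∈ M.Sig a w := hdc a w t ht {v} (by simpa using hvt)
    have := hw w rfl {v} h1
    exact (hφ W M ⟨hne, hdc, hrefl, hintro⟩ _).mp this v rfl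
end

section
/- If π : M̂ → M is a bisimilar covering of inquisitive epistemic models, then the relation Z consisting of all pairs (û, π(û)) of worlds together with all pairs (ŝ, π(ŝ)) for ŝ ∈ Σ̂_a(ŵ) (some a, ŵ) is an inquisitive bisimulation; in particular M̂,ŵ ∼ M,π(ŵ) for every world ŵ. -/
/-- An inquisitive bisimulation between two models: a pair of relations on
worlds and on information states with the usual atom/forth/back conditions. -/
def IsBisim {Wh W A P : Type} (Mh : PreModel Wh A P) (M : PreModel W A P)
    (Zw : Wh → W → Prop) (Zs : Set Wh → Set W → Prop) : Prop :=
  (∀ wh w, Zw wh w → ∀ p, wh ∈ Mh.V p ↔ w ∈ M.V p) ∧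
  (∀ wh w, Zw wh w → ∀ a, ∀ sh ∈ Mh.Sig a wh, ∃ s ∈ M.Sig a w, Zs sh s) ∧
  (∀ wh w, Zw wh w → ∀ a, ∀ s ∈ M.Sig a w, ∃ sh ∈ Mh.Sig a wh, Zs sh s) ∧
  (∀ sh s, Zs sh s →
    (∀ uh ∈ sh, ∃ u ∈ s, Zw uh u) ∧ (∀ u ∈ s, ∃ uh ∈ sh, Zw uh u))

/-- World-pointed bisimilarity. -/
def Bisimilar {Wh W A P : Type} (Mh : PreModel Wh A P) (M : PreModel W A P)
    (wh : Wh) (w : W) : Prop :=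
  ∃ Zw Zs, IsBisim Mh M Zw Zs ∧ Zw wh w

/-- State-pointed bisimilarity: each world of either state is bisimilar
to some world of the other. -/
def StateBisimilar {Wh W A P : Type} (Mh : PreModel Wh A P) (M : PreModel W A P)
    (sh : Set Wh) (s : Set W) : Prop :=
  (∀ uh ∈ sh, ∃ u ∈ s, Bisimilar Mh M uh u) ∧
  (∀ u ∈ s, ∃ uh ∈ sh, Bisimilar Mh M uh u)

/-- A bisimilar covering of inquisitive epistemic models. -/
def IsCovering {Wh W A P : Type} (Mh : PreModel Wh A P) (M : PreModel W A P)
    (π : Wh → W) : Prop :=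
  Function.Surjective π ∧
  (∀ (a : A) (wh : Wh), (Set.image π) '' (Mh.Sig a wh) = M.Sig a (π wh)) ∧
  (∀ p, Mh.V p = π ⁻¹' (M.V p))

/-- The canonical lifting of a covering projection is an inquisitive bisimulation;
in particular `Mh,wh ∼ M,π(wh)` for every world. -/
theorem stmt_12 {Wh W A P : Type} (Mh : PreModel Wh A P) (M : PreModel W A P)
    (hMh : Mh.IsInqEpi) (hM : M.IsInqEpi) (π : Wh → W) (hπ : IsCovering Mh M π) :
    IsBisim Mh M (fun uh u => u = π uh)
      (fun sh s => s = π '' sh ∧ ∃ (a : A) (wh : Wh), sh ∈ Mh.Sig a wh) ∧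
    (∀ wh : Wh, Bisimilar Mh M wh (π wh)) := by
  obtain ⟨hsurj, hSig, hV⟩ := hπ
  have hbis : IsBisim Mh M (fun uh u => u = π uh)
      (fun sh s => s = π '' sh ∧ ∃ (a : A) (wh : Wh), sh ∈ Mh.Sig a wh) := by
    refine ⟨?_, ?_, ?_, ?_⟩
    · intro wh w hw p
      subst hw
      rw [hV p]
      rfl
    · intro wh w hw a sh hsh
      subst hw
      refine ⟨π '' sh, ?_, rfl, a, wh, hsh⟩
      rw [← hSig a wh]
      exact ⟨sh, hsh, rfl⟩
    · intro wh w hw a s hs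
      subst hw
      rw [← hSig a wh] at hs
      obtain ⟨sh, hsh, rfl⟩ := hs
      exact ⟨sh, hsh, rfl, a, wh, hsh⟩
    · rintro sh s ⟨rfl, -⟩
      constructor
      · intro uh huh
        exact ⟨π uh, ⟨uh, huh, rfl⟩, rfl⟩
      · rintro u ⟨uh, huh, rfl⟩
        exact ⟨uh, huh, rfl⟩
  exact ⟨hbis, fun wh => ⟨_, _, hbis, rfl⟩⟩
end

section
/- For any inquisitive epistemic model M and any K ∈ ℕ with K ≥ 1, the product model M × [K] — with worlds W × {1,…,K}, valuation pulled back along the projection π, and Σ_a(w,m) := { s ⊆ W×[K] : π(s) ∈ Σ_a(w) } — is an inquisitive epistemic model and π : M × [K] → M is a bisimilar covering. -/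
/-- The product model `M × [K]`. -/
def prodModel {W A P : Type} (M : PreModel W A P) (K : ℕ) :
    PreModel (W × Fin K) A P where
  Sig a x := {s | Prod.fst '' s ∈ M.Sig a x.1}
  V p := {x | x.1 ∈ M.V p}

/-- `M × [K]` is an inquisitive epistemic model and the projection is a
bisimilar covering. -/
theorem stmt_13 {W A P : Type} (M : PreModel W A P) (hM : M.IsInqEpi)
    (K : ℕ) (hK : 1 ≤ K) :
    (prodModel M K).IsInqEpi ∧ IsCovering (prodModel M K) M Prod.fst := by
  obtain ⟨hne, hdc, hfact, hintro⟩ := hM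
  have hKne : Nonempty (Fin K) := ⟨⟨0, hK⟩⟩
  have hsurj : Function.Surjective (Prod.fst : W × Fin K → W) :=
    fun w => ⟨(w, Classical.arbitrary _), rfl⟩
  refine ⟨⟨?_, ?_, ?_, ?_⟩, hsurj, ?_, ?_⟩
  · intro a w
    obtain ⟨s, hs⟩ := hne a w.1
    exact ⟨Prod.fst ⁻¹' s, by simpa [prodModel, Set.image_preimage_eq _ hsurj] using hs⟩
  · intro a w s hs t ht
    exact hdc a w.1 _ hs _ (Set.image_mono ht)
  · intro a w
    obtain ⟨s, hs, hws⟩ := hfact a w.1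
    refine ⟨{w}, ?_, rfl⟩
    show Prod.fst '' {w} ∈ M.Sig a w.1
    rw [Set.image_singleton]
    exact hdc a w.1 s hs _ (by simpa using hws)
  · intro a w v hv
    obtain ⟨s, hs, hvs⟩ := hv
    have hv1 : v.1 ∈ M.sigma a w.1 := ⟨_, hs, ⟨v, hvs, rfl⟩⟩
    have := hintro a w.1 v.1 hv1
    ext t
    simp only [prodModel, Set.mem_setOf_eq, this]
  · intro a w
    ext t
    constructor
    · rintro ⟨s, hs, rfl⟩
      exact hs
    · intro ht
      exact ⟨Prod.fst ⁻¹' t, by simpa [prodModel, Set.image_preimage_eq _ hsurj] using ht,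
        Set.image_preimage_eq _ hsurj⟩
  · intro p; rfl
end

section
/- The product model M × [K] is K-rich: for every world (w,m), agent a, and state s ∈ Σ_a(w,m), there is a state s' ∈ Σ_a(w,m) with s ⊆ s' such that every world of s' has at least K distinct copies in s' with the same projection, so that every bisimulation type realised in s is realised at least K times in s'. -/
/-- `M × [K]` is `K`-rich: every state of an inquisitive assignment extends to a
state of the same assignment in which every world has (at least) `K` distinct
copies with the same projection (hence every bisimulation type realised in `s`
is realised at least `K` times in `s'`). -/
theorem stmt_14 {W A P : Type} (M : PreModel W A P) (hM : M.IsInqEpi)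
    (K : ℕ) (hK : 1 ≤ K) (x : W × Fin K) (a : A) (s : Set (W × Fin K))
    (hs : s ∈ (prodModel M K).Sig a x) :
    ∃ s' ∈ (prodModel M K).Sig a x, s ⊆ s' ∧
      (∀ v ∈ s', ∀ k : Fin K, (v.1, k) ∈ s') ∧
      (∀ v ∈ s', K ≤ Set.ncard {u ∈ s' | u.1 = v.1}) := by
  refine ⟨(Prod.fst '' s) ×ˢ Set.univ, ?_, ?_, ?_, ?_⟩
  · have h1 : Prod.fst '' ((Prod.fst '' s) ×ˢ (Set.univ : Set (Fin K))) = Prod.fst '' s := by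
      ext w
      constructor
      · rintro ⟨⟨w', k⟩, ⟨hw, -⟩, rfl⟩; exact hw
      · intro hw
        exact ⟨(w, ⟨0, hK⟩), ⟨hw, trivial⟩, rfl⟩
    simpa [prodModel, h1] using hs
  · rintro ⟨w, k⟩ h
    exact ⟨⟨(w, k), h, rfl⟩, trivial⟩
  · rintro ⟨w, k⟩ ⟨hw, -⟩ k'
    exact ⟨hw, trivial⟩
  · rintro ⟨w, k⟩ ⟨hw, -⟩
    have heq : {u ∈ (Prod.fst '' s) ×ˢ (Set.univ : Set (Fin K)) | u.1 = w} = {w} ×ˢ (Set.univ : Set (Fin K)) := by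
      ext ⟨w', k'⟩
      simp only [Set.mem_setOf_eq, Set.mem_prod, Set.mem_singleton_iff, Set.mem_univ, and_true]
      constructor
      · rintro ⟨-, rfl⟩; rfl
      · rintro rfl; exact ⟨hw, rfl⟩
    rw [heq, Set.singleton_prod,
      Set.ncard_image_of_injective _ (Prod.mk_right_injective w)]
    simp [Set.ncard_univ]
end

section
/- For a finite signature (finitely many agents and atomic propositions), n-bisimilarity of world-pointed inquisitive epistemic models implies agreement on all InqML formulas of modal nesting depth at most n: if M,w ∼ⁿ M',w' then for every φ ∈ InqML_n, M,w ⊨ φ iff M',w' ⊨ φ. -/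
/-- `n`-bisimilarity of world-pointed models (defender's winning condition in
the `n`-round inquisitive bisimulation game). -/
def worldBisim {W W' A P : Type} (M : PreModel W A P) (M' : PreModel W' A P) :
    ℕ → W → W' → Prop
  | 0 => fun w w' => ∀ p, w ∈ M.V p ↔ w' ∈ M'.V p
  | n + 1 => fun w w' =>
      (∀ p, w ∈ M.V p ↔ w' ∈ M'.V p) ∧
      (∀ a, ∀ s ∈ M.Sig a w, ∃ s' ∈ M'.Sig a w',
        (∀ u ∈ s, ∃ u' ∈ s', worldBisim M M' n u u') ∧
        (∀ u' ∈ s', ∃ u ∈ s, worldBisim M M' n u u')) ∧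
      (∀ a, ∀ s' ∈ M'.Sig a w', ∃ s ∈ M.Sig a w,
        (∀ u ∈ s, ∃ u' ∈ s', worldBisim M M' n u u') ∧
        (∀ u' ∈ s', ∃ u ∈ s, worldBisim M M' n u u'))

/-- `n`-bisimilarity of state-pointed models. -/
def stateBisim {W W' A P : Type} (M : PreModel W A P) (M' : PreModel W' A P)
    (n : ℕ) (s : Set W) (s' : Set W') : Prop :=
  (∀ u ∈ s, ∃ u' ∈ s', worldBisim M M' n u u') ∧
  (∀ u' ∈ s', ∃ u ∈ s, worldBisim M M' n u u')

/-- Modal nesting depth of a formula. -/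
def depth {A P : Type} : Formula A P → ℕ
  | .atom _ => 0
  | .bot => 0
  | .and φ ψ => max (depth φ) (depth ψ)
  | .impl φ ψ => max (depth φ) (depth ψ)
  | .disj φ ψ => max (depth φ) (depth ψ)
  | .box _ φ => depth φ + 1
  | .wbox _ φ => depth φ + 1

lemma worldBisim_atoms {W W' A P : Type} (M : PreModel W A P) (M' : PreModel W' A P) :
    ∀ n w w', worldBisim M M' n w w' → ∀ p, w ∈ M.V p ↔ w' ∈ M'.V p
  | 0, _, _, h => h
  | _+1, _, _, h => h.1

lemma sigma_bisim {W W' A P : Type} (M : PreModel W A P) (M' : PreModel W' A P)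
    (n : ℕ) (a : A) (w : W) (w' : W') (h : worldBisim M M' (n+1) w w') :
    stateBisim M M' n (M.sigma a w) (M'.sigma a w') := by
  constructor
  · intro u hu
    obtain ⟨s0, hs0, hus0⟩ := hu
    obtain ⟨s', hs', hforth, _⟩ := h.2.1 a s0 hs0
    obtain ⟨u', hu', hb⟩ := hforth u hus0
    exact ⟨u', ⟨s', hs', hu'⟩, hb⟩
  · intro u' hu'
    obtain ⟨s0', hs0', hus0'⟩ := hu'
    obtain ⟨s, hs, _, hback⟩ := h.2.2 a s0' hs0'
    obtain ⟨u, hu, hb⟩ := hback u' hus0'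
    exact ⟨u, ⟨s, hs, hu⟩, hb⟩

lemma support_bisim {W W' A P : Type} (M : PreModel W A P) (M' : PreModel W' A P) :
    ∀ (φ : Formula A P) (n : ℕ) (s : Set W) (s' : Set W'),
      stateBisim M M' n s s' → depth φ ≤ n →
      (support M φ s ↔ support M' φ s') := by
  intro φ
  induction φ with
  | atom p =>
    intro n s s' hb _
    constructor
    · intro hs u' hu'
      obtain ⟨u, hu, hwb⟩ := hb.2 u' hu'
      exact (worldBisim_atoms M M' n u u' hwb p).mp (hs hu)
    · intro hs u hu
      obtain ⟨u', hu', hwb⟩ := hb.1 u hu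
      exact (worldBisim_atoms M M' n u u' hwb p).mpr (hs hu')
  | bot =>
    intro n s s' hb _
    simp only [support]
    constructor
    · intro hs
      rw [Set.eq_empty_iff_forall_notMem]
      intro u' hu'
      obtain ⟨u, hu, _⟩ := hb.2 u' hu'
      rw [hs] at hu; exact hu
    · intro hs
      rw [Set.eq_empty_iff_forall_notMem]
      intro u hu
      obtain ⟨u', hu', _⟩ := hb.1 u hu
      rw [hs] at hu'; exact hu'
  | and φ ψ ihφ ihψ =>
    intro n s s' hb hd
    simp only [depth, max_le_iff] at hd
    exact and_congr (ihφ n s s' hb hd.1) (ihψ n s s' hb hd.2)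
  | impl φ ψ ihφ ihψ =>
    intro n s s' hb hd
    simp only [depth, max_le_iff] at hd
    constructor
    · intro hs t' ht' hφ'
      set t : Set W := {u ∈ s | ∃ u' ∈ t', worldBisim M M' n u u'} with htdef
      have hbt : stateBisim M M' n t t' := by
        constructor
        · intro u hu; exact hu.2
        · intro u' hu'
          obtain ⟨u, hu, hwb⟩ := hb.2 u' (ht' hu')
          exact ⟨u, ⟨hu, u', hu', hwb⟩, hwb⟩
      have hts : t ⊆ s := fun u hu => hu.1
      exact (ihψ n t t' hbt hd.2).mp (hs t hts ((ihφ n t t' hbt hd.1).mpr hφ'))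
    · intro hs t ht hφ
      set t' : Set W' := {u' ∈ s' | ∃ u ∈ t, worldBisim M M' n u u'} with htdef
      have hbt : stateBisim M M' n t t' := by
        constructor
        · intro u hu
          obtain ⟨u', hu', hwb⟩ := hb.1 u (ht hu)
          exact ⟨u', ⟨hu', u, hu, hwb⟩, hwb⟩
        · intro u' hu'
          obtain ⟨u, hu, hwb⟩ := hu'.2
          exact ⟨u, hu, hwb⟩
      have hts : t' ⊆ s' := fun u' hu' => hu'.1
      exact (ihψ n t t' hbt hd.2).mpr (hs t' hts ((ihφ n t t' hbt hd.1).mp hφ))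
  | disj φ ψ ihφ ihψ =>
    intro n s s' hb hd
    simp only [depth, max_le_iff] at hd
    exact or_congr (ihφ n s s' hb hd.1) (ihψ n s s' hb hd.2)
  | box a φ ih =>
    intro n s s' hb hd
    obtain ⟨m, rfl⟩ : ∃ m, n = m + 1 := ⟨n - 1, by simp [depth] at hd; omega⟩
    have hdφ : depth φ ≤ m := by simp [depth] at hd; omega
    constructor
    · intro hs u' hu'
      obtain ⟨u, hu, hwb⟩ := hb.2 u' hu'
      exact (ih m _ _ (sigma_bisim M M' m a u u' hwb) hdφ).mp (hs u hu)
    · intro hs u hu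
      obtain ⟨u', hu', hwb⟩ := hb.1 u hu
      exact (ih m _ _ (sigma_bisim M M' m a u u' hwb) hdφ).mpr (hs u' hu')
  | wbox a φ ih =>
    intro n s s' hb hd
    obtain ⟨m, rfl⟩ : ∃ m, n = m + 1 := ⟨n - 1, by simp [depth] at hd; omega⟩
    have hdφ : depth φ ≤ m := by simp [depth] at hd; omega
    constructor
    · intro hs u' hu' t' ht'
      obtain ⟨u, hu, hwb⟩ := hb.2 u' hu'
      obtain ⟨t, ht, hforth, hback⟩ := hwb.2.2 a t' ht'
      exact (ih m t t' ⟨hforth, hback⟩ hdφ).mp (hs u hu t ht)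
    · intro hs u hu t ht
      obtain ⟨u', hu', hwb⟩ := hb.1 u hu
      obtain ⟨t', ht', hforth, hback⟩ := hwb.2.1 a t ht
      exact (ih m t t' ⟨hforth, hback⟩ hdφ).mpr (hs u' hu' t' ht')

/-- Over a finite signature, `n`-bisimilar world-pointed models agree on all
InqML formulas of modal nesting depth at most `n`. -/
theorem stmt_19 {W W' A P : Type} [Fintype A] [Fintype P]
    (M : PreModel W A P) (M' : PreModel W' A P)
    (hM : M.IsInqEpi) (hM' : M'.IsInqEpi) (n : ℕ) (w : W) (w' : W')
    (h : worldBisim M M' n w w') :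
    ∀ φ : Formula A P, depth φ ≤ n →
      (support M φ {w} ↔ support M' φ {w'}) := by
  intro φ hφ
  apply support_bisim M M' φ n
  · exact ⟨fun u hu => ⟨w', rfl, hu ▸ h⟩, fun u' hu' => ⟨w, rfl, hu' ▸ h⟩⟩
  · exact hφ
end
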